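/- Roth–Vontobel-type rank lemma: let E ∈ F^{L×n} be an error matrix of rank r_E with column support U_E satisfying 2|U_E| < n − k_max + r_E. Then any nonzero polynomial Λ(x) satisfying deg(E⁽ⁱ⁾(x)Λ(x) mod m(x)) < k⁽ⁱ⁾ + |U_E| for all i ∈ {1,…,L} is divisible by Λ_E(x) = Π_{ℓ∈U_E}(x − β_ℓ). -/

import Mathlib

open Polynomial Matrix

private lemma prod_X_sub_C_dvd_of_eval_eq_zero' {F : Type*} [Field F] {n : ℕ}
    {β : Fin n → F} (hβ : Function.Injective β) (V : Finset (Fin n)) {p : F[X]}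
    (h : ∀ ℓ ∈ V, p.eval (β ℓ) = 0) :
    (∏ ℓ ∈ V, (X - C (β ℓ))) ∣ p := by
  apply Finset.prod_dvd_of_coprime
  · exact ((pairwise_coprime_X_sub_C hβ).set_pairwise _)
  · intro ℓ hℓ
    exact dvd_iff_isRoot.mpr (h ℓ hℓ)

/-- Roth–Vontobel-type rank lemma: if `2|U_E| < n − k_max + rank E`, then any
nonzero polynomial `Λ` with `deg(E⁽ⁱ⁾ Λ mod m) < k⁽ⁱ⁾ + |U_E|` for all `i` is
divisible by the error locator `Λ_E = ∏_{ℓ∈U_E} (x − β_ℓ)`. -/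
theorem rank_lemma_errorLocator_dvd {F : Type*} [Field F] {L n : ℕ}
    (β : Fin n → F) (hβ : Function.Injective β)
    (E : Matrix (Fin L) (Fin n) F)
    (Epoly : Fin L → F[X])
    (hEdeg : ∀ i, (Epoly i).degree < (n : WithBot ℕ))
    (hEval : ∀ i ℓ, (Epoly i).eval (β ℓ) = E i ℓ)
    (U : Finset (Fin n))
    (hU : ∀ ℓ, ℓ ∈ U ↔ ∃ i, E i ℓ ≠ 0)
    (k : Fin L → ℕ) (hkn : ∀ i, k i < n)
    (hrank : 2 * U.card < n - Finset.univ.sup k + E.rank) :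
    ∀ Λ : F[X], Λ ≠ 0 →
      (∀ i, ((Epoly i) * Λ % (∏ ℓ, (X - C (β ℓ)))).degree <
        ((k i + U.card : ℕ) : WithBot ℕ)) →
      (∏ ℓ ∈ U, (X - C (β ℓ))) ∣ Λ := by
  classical
  intro Λ hΛ hdeg
  by_cases hUe : U = ∅
  · simp [hUe]
  have hUne : U.Nonempty := Finset.nonempty_iff_ne_empty.mpr hUe
  have hnpos : 0 < n := hUne.choose.pos
  have hkmax : Finset.univ.sup k < n :=
    (Finset.sup_lt_iff (by simpa using hnpos)).mpr fun i _ => hkn i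
  set m : F[X] := ∏ ℓ, (X - C (β ℓ)) with hm
  have hmmonic : m.Monic := monic_prod_of_monic _ _ fun ℓ _ => monic_X_sub_C _
  have hmeval : ∀ ℓ, m.eval (β ℓ) = 0 := by
    intro ℓ
    rw [hm, eval_prod]
    exact Finset.prod_eq_zero (Finset.mem_univ ℓ) (by simp)
  have hmodeval : ∀ (p : F[X]) ℓ, (p % m).eval (β ℓ) = p.eval (β ℓ) := by
    intro p ℓ
    conv_rhs => rw [← modByMonic_add_div p m]
    rw [modByMonic_eq_mod p hmmonic]
    simp [hmeval ℓ]
  set Γ : Fin L → F[X] := fun i => Epoly i * Λ % m with hΓ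
  have hdegΓ : ∀ i, (Γ i).degree < ((k i + U.card : ℕ) : WithBot ℕ) := hdeg
  have hΓeval : ∀ i ℓ, (Γ i).eval (β ℓ) = E i ℓ * Λ.eval (β ℓ) := by
    intro i ℓ
    show ((Epoly i * Λ) % m).eval (β ℓ) = _
    rw [hmodeval, eval_mul, hEval]
  set T : Finset (Fin n) := U.filter (fun ℓ => Λ.eval (β ℓ) = 0) with hT
  have hTsub : T ⊆ U := Finset.filter_subset _ _
  suffices hTU : ∀ ℓ ∈ U, Λ.eval (β ℓ) = 0 by
    exact prod_X_sub_C_dvd_of_eval_eq_zero' hβ U hTU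
  set Q : Finset (Fin n) := (Finset.univ \ U) ∪ T with hQ
  set P : F[X] := ∏ ℓ ∈ Q, (X - C (β ℓ)) with hP
  have hPdvd : ∀ i, P ∣ Γ i := by
    intro i
    apply prod_X_sub_C_dvd_of_eval_eq_zero' hβ
    intro ℓ hℓ
    rw [hΓeval]
    rcases Finset.mem_union.mp hℓ with h | h
    · have hz : E i ℓ = 0 := by
        by_contra hne
        exact (Finset.mem_sdiff.mp h).2 ((hU ℓ).mpr ⟨i, hne⟩)
      rw [hz, zero_mul]
    · rw [(Finset.mem_filter.mp h).2, mul_zero]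
  choose σ hσ using hPdvd
  have hUn : U.card ≤ n := by simpa using U.card_le_univ
  have hTU' : T.card ≤ U.card := Finset.card_le_card hTsub
  have hQcard : Q.card = (n - U.card) + T.card := by
    rw [hQ, Finset.card_union_of_disjoint
      (Finset.disjoint_left.mpr fun a ha hb => (Finset.mem_sdiff.mp ha).2 (hTsub hb)),
      Finset.card_sdiff_of_subset (Finset.subset_univ U)]
    simp
  have hPmonic : P.Monic := monic_prod_of_monic _ _ fun ℓ _ => monic_X_sub_C _
  have hPdeg : P.natDegree = (n - U.card) + T.card := by
    rw [hP, natDegree_prod _ _ fun ℓ _ => X_sub_C_ne_zero _]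
    simp [hQcard]
  set D : ℕ := (Finset.univ.sup k + 2 * U.card) - (n + T.card) with hD
  have hσdeg : ∀ i, σ i ≠ 0 → (σ i).natDegree < D := by
    intro i hσi
    have hΓne : Γ i ≠ 0 := by
      rw [hσ i]
      exact mul_ne_zero hPmonic.ne_zero hσi
    have h1 : (Γ i).natDegree < k i + U.card :=
      (natDegree_lt_iff_degree_lt hΓne).mpr (hdegΓ i)
    have h2 : (Γ i).natDegree = P.natDegree + (σ i).natDegree := by
      rw [hσ i, natDegree_mul hPmonic.ne_zero hσi]
    have hki : k i ≤ Finset.univ.sup k := Finset.le_sup (Finset.mem_univ i)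
    omega
  by_cases hD0 : D = 0
  · have hΓ0 : ∀ i, Γ i = 0 := by
      intro i
      by_contra h
      have hσne : σ i ≠ 0 := fun h0 => h (by rw [hσ i, h0, mul_zero])
      have := hσdeg i hσne
      omega
    intro ℓ hℓ
    obtain ⟨i, hi⟩ := (hU ℓ).mp hℓ
    have h0 := hΓeval i ℓ
    rw [hΓ0 i] at h0
    simp only [eval_zero] at h0
    rcases mul_eq_zero.mp h0.symm with h | h
    · exact absurd h hi
    · exact h
  · exfalso
    set v : ℕ → (Fin L → F) := fun j i => (σ i).coeff j with hv
    set gens : Finset (Fin L → F) :=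
      T.image (fun ℓ i => E i ℓ) ∪ (Finset.range D).image v with hgens
    set W : Submodule F (Fin L → F) := Submodule.span F (gens : Set (Fin L → F)) with hW
    have hcol : ∀ ℓ : Fin n, Eᵀ ℓ ∈ W := by
      intro ℓ
      by_cases hℓU : ℓ ∈ U
      · by_cases hℓT : ℓ ∈ T
        · apply Submodule.subset_span
          exact Finset.mem_coe.mpr (Finset.mem_union_left _
            (Finset.mem_image_of_mem (fun ℓ i => E i ℓ) hℓT))
        · have hΛℓ : Λ.eval (β ℓ) ≠ 0 := fun h => hℓT (Finset.mem_filter.mpr ⟨hℓU, h⟩)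
          have hcolexp : Eᵀ ℓ = ∑ j ∈ Finset.range D,
              ((P.eval (β ℓ) * (Λ.eval (β ℓ))⁻¹ * (β ℓ) ^ j)) • v j := by
            funext i
            have hE : E i ℓ * Λ.eval (β ℓ) = P.eval (β ℓ) * (σ i).eval (β ℓ) := by
              rw [← hΓeval, hσ i, eval_mul]
            have hσd : (σ i).natDegree < D := by
              by_cases h : σ i = 0
              · rw [h]; simpa using Nat.pos_of_ne_zero hD0
              · exact hσdeg i h
            have hev : (σ i).eval (β ℓ) =
                ∑ j ∈ Finset.range D, (σ i).coeff j * (β ℓ) ^ j :=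
              eval_eq_sum_range' hσd (β ℓ)
            have hEi : E i ℓ = P.eval (β ℓ) * (σ i).eval (β ℓ) * (Λ.eval (β ℓ))⁻¹ := by
              field_simp
              linear_combination hE
            simp only [Matrix.transpose_apply, Finset.sum_apply, Pi.smul_apply,
              smul_eq_mul]
            rw [hEi, hev, Finset.mul_sum, Finset.sum_mul]
            apply Finset.sum_congr rfl
            intro j _
            show P.eval (β ℓ) * ((σ i).coeff j * β ℓ ^ j) * (Λ.eval (β ℓ))⁻¹ =
              P.eval (β ℓ) * (Λ.eval (β ℓ))⁻¹ * β ℓ ^ j * (σ i).coeff j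
            ring
          rw [hcolexp]
          exact Submodule.sum_mem _ fun j hj => Submodule.smul_mem _ _
            (Submodule.subset_span (Finset.mem_coe.mpr (Finset.mem_union_right _
              (Finset.mem_image_of_mem v hj))))
      · have hz : Eᵀ ℓ = 0 := by
          funext i
          by_contra hne
          exact hℓU ((hU ℓ).mpr ⟨i, hne⟩)
        rw [hz]
        exact W.zero_mem
    have hrle : E.rank ≤ gens.card := by
      rw [Matrix.rank_eq_finrank_span_cols]
      calc Module.finrank F (Submodule.span F (Set.range Eᵀ))
          ≤ Module.finrank F W :=
            Submodule.finrank_mono (Submodule.span_le.mpr (Set.range_subset_iff.mpr hcol))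
        _ ≤ gens.card := finrank_span_finset_le_card gens
    have hgcard : gens.card ≤ T.card + D :=
      le_trans (Finset.card_union_le _ _)
        (add_le_add (le_trans Finset.card_image_le le_rfl)
          (le_trans Finset.card_image_le (by simp)))
    omega
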